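/- Let n and ℓ be integers with n ≥ 3ℓ and n > ℓ ≥ 0, and exclude the cases where n = 3ℓ and 2 ≤ ℓ ≤ 5. Then for every down-set F ⊆ 2^[n] with ‖F‖_n < n + 1, one has |F| ≥ Σ_{0 ≤ i < ℓ} C(n,i) + (‖F‖_n − ℓ)·C(n,ℓ). -/

import Mathlib

open Finset

/-- The binomial norm of a family `F` of subsets of `[n]`:
`‖F‖ₙ = ∑_{A ∈ F} 1 / C(n, |A|)`. -/
noncomputable def binNorm (n : ℕ) (F : Finset (Finset ℕ)) : ℝ :=
  ∑ A ∈ F, 1 / (n.choose A.card : ℝ)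

lemma sum_choose_succ (n m : ℕ) :
    ∑ j ∈ range (m+1), (n+1).choose j + n.choose m
      = 2 * ∑ j ∈ range (m+1), n.choose j := by
  induction m with
  | zero => simp
  | succ m ih =>
    rw [sum_range_succ, sum_range_succ (f := fun j => n.choose j)]
    have h : (n+1).choose (m+1) = n.choose m + n.choose (m+1) := by
      rw [Nat.choose_succ_succ]
    omega

lemma KL_step' (k m : ℕ) (hmk : 2*k+2 ≤ m)
    (IH : m * (m+(k+1)).choose (k+1) + 1 ≤ ∑ j ∈ range (m+1), (m+(k+1)).choose j) :
    (m+1) * ((m+(k+1))+1).choose (k+1) + 1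
      ≤ ∑ j ∈ range (m+2), ((m+(k+1))+1).choose j := by
  have hrec : ∑ j ∈ range (m+2), ((m+(k+1))+1).choose j
      = 2 * ∑ j ∈ range (m + 1), (m+(k+1)).choose j + (m+(k+1)).choose k := by
    have h1 := sum_choose_succ (m+(k+1)) (m + 1)
    have h2 : ∑ j ∈ range (m+2), (m+(k+1)).choose j
        = ∑ j ∈ range (m + 1), (m+(k+1)).choose j + (m+(k+1)).choose (m + 1) :=
      sum_range_succ _ _
    have hsymm : (m+(k+1)).choose (m + 1) = (m+(k+1)).choose k := by
      rw [← Nat.choose_symm (by omega : m + 1 ≤ m+(k+1))]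
      congr 1
      omega
    have h3 : range (m+1+1) = range (m+2) := by norm_num
    rw [h3] at h1
    omega
  rw [hrec]
  have hpas : ((m+(k+1))+1).choose (k+1)
      = (m+(k+1)).choose (k+1) + (m+(k+1)).choose k := by
    have hp := Nat.choose_succ_succ (m+(k+1)) k
    simp only [Nat.succ_eq_add_one] at hp
    omega
  rw [hpas]
  have hid : (m+(k+1)).choose (k+1) * (k+1)
      = (m+(k+1)).choose k * ((m+(k+1)) - k) := Nat.choose_succ_right_eq _ k
  have e3 : (m+(k+1)) - k = m + 1 := by omega
  rw [e3] at hid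
  have hkey : m * (m+(k+1)).choose k + (m+(k+1)).choose (k+1)
      ≤ m * (m+(k+1)).choose (k+1) := by
    have h4 : (m+1) * (m+(k+1)).choose k = (k+1) * (m+(k+1)).choose (k+1) := by
      rw [mul_comm (k+1) _, hid]; ring
    have h5 : (k+2) * (m+(k+1)).choose (k+1) ≤ m * (m+(k+1)).choose (k+1) :=
      Nat.mul_le_mul_right _ (by omega)
    nlinarith [h4, h5, Nat.zero_le ((m+(k+1)).choose k)]
  set x := (m+(k+1)).choose (k+1) with hx
  set y := (m+(k+1)).choose k with hy
  set S := ∑ j ∈ range (m + 1), (m+(k+1)).choose j with hS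
  calc (m + 1) * (x + y) + 1 = (m * x + 1) + (m * y + x) + y := by ring
    _ ≤ S + (m * x) + y := by omega
    _ ≤ 2 * S + y := by omega

lemma KL_step (n ℓ : ℕ) (hl : 1 ≤ ℓ) (h3 : 3*ℓ ≤ n)
    (IH : (n - ℓ) * n.choose ℓ + 1 ≤ ∑ j ∈ range (n - ℓ + 1), n.choose j) :
    (n + 1 - ℓ) * (n+1).choose ℓ + 1 ≤ ∑ j ∈ range (n + 1 - ℓ + 1), (n+1).choose j := by
  obtain ⟨k, rfl⟩ : ∃ k, ℓ = k + 1 := ⟨ℓ-1, by omega⟩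
  obtain ⟨m, rfl⟩ : ∃ m, n = m + (k+1) := ⟨n - (k+1), by omega⟩
  have e1 : m + (k+1) - (k+1) = m := by omega
  have e2 : m + (k+1) + 1 - (k+1) = m + 1 := by omega
  rw [e1] at IH
  rw [e2]
  have := KL_step' k m (by omega) IH
  convert this using 3

-- C(n+1,k)*(n+1-k) = (n+1)*C(n,k)
lemma aid (n k : ℕ) : (n+1).choose k * (n+1-k) = (n+1) * n.choose k := by
  have h1 := Nat.choose_succ_right_eq (n+1) k
  have h2 := Nat.add_one_mul_choose_eq n k
  omega

lemma L1 : ∀ ℓ, 7 ≤ ℓ → 5*ℓ*((3*ℓ).choose ℓ) + 2 ≤ 2^(3*ℓ+1) := by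
  intro ℓ hℓ
  induction ℓ, hℓ using Nat.le_induction with
  | base => decide
  | succ ℓ hℓ IH =>
    have i1 : (3*ℓ+1).choose ℓ * (2*ℓ+1) = (3*ℓ+1) * (3*ℓ).choose ℓ := by
      have := aid (3*ℓ) ℓ
      have e : 3*ℓ+1-ℓ = 2*ℓ+1 := by omega
      rw [e] at this; exact this
    have i2 : (3*ℓ+2).choose ℓ * (2*ℓ+2) = (3*ℓ+2) * (3*ℓ+1).choose ℓ := by
      have := aid (3*ℓ+1) ℓ
      have e : 3*ℓ+1+1-ℓ = 2*ℓ+2 := by omega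
      rw [e] at this
      convert this using 2 <;> omega
    have i3 : (3*ℓ+3) * (3*ℓ+2).choose ℓ = (3*ℓ+3).choose (ℓ+1) * (ℓ+1) := by
      have := Nat.add_one_mul_choose_eq (3*ℓ+2) ℓ
      convert this using 2 <;> omega
    -- combined identity
    have key : (3*ℓ+3).choose (ℓ+1) * ((ℓ+1) * ((2*ℓ+2) * (2*ℓ+1)))
        = ((3*ℓ+3) * ((3*ℓ+2) * (3*ℓ+1))) * (3*ℓ).choose ℓ := by
      calc (3*ℓ+3).choose (ℓ+1) * ((ℓ+1) * ((2*ℓ+2) * (2*ℓ+1)))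
          = ((3*ℓ+3).choose (ℓ+1) * (ℓ+1)) * (2*ℓ+2) * (2*ℓ+1) := by ring
        _ = ((3*ℓ+3) * (3*ℓ+2).choose ℓ) * (2*ℓ+2) * (2*ℓ+1) := by rw [i3]
        _ = (3*ℓ+3) * ((3*ℓ+2).choose ℓ * (2*ℓ+2)) * (2*ℓ+1) := by ring
        _ = (3*ℓ+3) * ((3*ℓ+2) * (3*ℓ+1).choose ℓ) * (2*ℓ+1) := by rw [i2]
        _ = (3*ℓ+3) * (3*ℓ+2) * ((3*ℓ+1).choose ℓ * (2*ℓ+1)) := by ring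
        _ = (3*ℓ+3) * (3*ℓ+2) * ((3*ℓ+1) * (3*ℓ).choose ℓ) := by rw [i1]
        _ = ((3*ℓ+3) * ((3*ℓ+2) * (3*ℓ+1))) * (3*ℓ).choose ℓ := by ring
    set C := (3*ℓ).choose ℓ with hC
    set C' := (3*ℓ+3).choose (ℓ+1) with hC'
    set D := (ℓ+1) * ((2*ℓ+2) * (2*ℓ+1)) with hD
    have hDpos : 0 < D := by positivity
    have goal' : (5*(ℓ+1)*C' + 2) * D ≤ 2^(3*ℓ+4) * D := by
      have expand : (5*(ℓ+1)*C' + 2) * D = 5*(ℓ+1)*(C'*D) + 2*D := by ring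
      rw [expand, key]
      have poly : 5*(ℓ+1)*(((3*ℓ+3) * ((3*ℓ+2) * (3*ℓ+1)))) ≤ 40*ℓ*D := by
        rw [hD]
        have h : 135*ℓ^2+135*ℓ+30 ≤ 160*ℓ^2+80*ℓ := by nlinarith [hℓ]
        calc 5*(ℓ+1)*(((3*ℓ+3) * ((3*ℓ+2) * (3*ℓ+1))))
            = (135*ℓ^2+135*ℓ+30)*(ℓ+1)^2 := by ring
          _ ≤ (160*ℓ^2+80*ℓ)*(ℓ+1)^2 := Nat.mul_le_mul_right _ h
          _ = 40*ℓ*((ℓ+1) * ((2*ℓ+2) * (2*ℓ+1))) := by ring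
      have hc1 : 5*(ℓ+1)*(((3*ℓ+3) * ((3*ℓ+2) * (3*ℓ+1))) * C) ≤ 40*ℓ*D*C := by
        have := Nat.mul_le_mul_right C poly
        calc 5*(ℓ+1)*(((3*ℓ+3) * ((3*ℓ+2) * (3*ℓ+1))) * C)
            = (5*(ℓ+1)*((3*ℓ+3) * ((3*ℓ+2) * (3*ℓ+1)))) * C := by ring
          _ ≤ (40*ℓ*D) * C := this
      have hIHD : (5*ℓ*C + 2) * (8*D) ≤ 2^(3*ℓ+1) * (8*D) := Nat.mul_le_mul_right _ IH
      have hp : 2^(3*ℓ+4) = 2^(3*ℓ+1) * 8 := by ring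
      rw [hp]
      nlinarith [hc1, hIHD, hDpos, Nat.zero_le C]
    have := Nat.le_of_mul_le_mul_right goal' hDpos
    calc 5*(ℓ+1)*((3*(ℓ+1)).choose (ℓ+1)) + 2
        = 5*(ℓ+1)*C' + 2 := by rw [hC', show 3*(ℓ+1) = 3*ℓ+3 from by ring]
      _ ≤ 2^(3*ℓ+4) := this
      _ = 2^(3*(ℓ+1)+1) := by ring_nf

lemma choose_mono_of_le_half {n a b : ℕ} (hab : a ≤ b) (hb : b ≤ n / 2) :
    n.choose a ≤ n.choose b := by
  induction b with
  | zero => simp [Nat.le_zero.1 hab]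
  | succ b ih =>
    rcases lt_or_ge a (b+1) with h | h
    · exact le_trans (ih (by omega) (by omega))
        (Nat.choose_le_succ_of_lt_half_left (by omega))
    · have : a = b + 1 := by omega
      simp [this]

lemma sum_choose_reflect {n a b : ℕ} (hab : a ≤ b) (hb : b ≤ n) :
    ∑ j ∈ Icc a b, n.choose j = ∑ j ∈ Icc (n-b) (n-a), n.choose j := by
  refine sum_nbij' (fun j => n - j) (fun j => n - j) ?_ ?_ ?_ ?_ ?_
  · intro j hj; simp only [mem_Icc] at *; omega
  · intro j hj; simp only [mem_Icc] at *; omega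
  · intro j hj; simp only [mem_Icc] at *; omega
  · intro j hj; simp only [mem_Icc] at *; omega
  · intro j hj
    simp only [mem_Icc] at hj
    rw [Nat.choose_symm (by omega)]

lemma B_large (ℓ : ℕ) (hℓ : 7 ≤ ℓ) :
    (3*ℓ - ℓ) * (3*ℓ).choose ℓ + 1 ≤ ∑ j ∈ range (3*ℓ - ℓ + 1), (3*ℓ).choose j := by
  have e : 3*ℓ - ℓ = 2*ℓ := by omega
  rw [e]
  have htot : ∑ j ∈ range (3*ℓ+1), (3*ℓ).choose j = 2^(3*ℓ) := Nat.sum_range_choose (3*ℓ)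
  have hsplit : ∑ j ∈ range (2*ℓ+1), (3*ℓ).choose j
      + ∑ j ∈ Ico (2*ℓ+1) (3*ℓ+1), (3*ℓ).choose j
      = ∑ j ∈ range (3*ℓ+1), (3*ℓ).choose j := by
    rw [range_eq_Ico, range_eq_Ico]
    exact sum_Ico_consecutive (fun j => (3*ℓ).choose j) (by omega : 0 ≤ 2*ℓ+1) (by omega : 2*ℓ+1 ≤ 3*ℓ+1)
  have hrefl : ∑ j ∈ Ico (2*ℓ+1) (3*ℓ+1), (3*ℓ).choose j
      = ∑ j ∈ range ℓ, (3*ℓ).choose j := by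
    have hrfl := sum_choose_reflect (n := 3*ℓ) (a := 2*ℓ+1) (b := 3*ℓ) (by omega) (by omega)
    rw [Finset.Ico_add_one_right_eq_Icc, hrfl]
    congr 1
    rw [show 3*ℓ - 3*ℓ = 0 from by omega, show 3*ℓ - (2*ℓ+1) = ℓ - 1 from by omega,
      range_eq_Ico, ← Finset.Ico_add_one_right_eq_Icc]
    congr 1
    omega
  have hU : ∑ j ∈ range ℓ, (3*ℓ).choose j ≤ ℓ * (3*ℓ).choose (ℓ-1) := by
    calc ∑ j ∈ range ℓ, (3*ℓ).choose j ≤ (range ℓ).card • (3*ℓ).choose (ℓ-1) := by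
          apply sum_le_card_nsmul
          intro j hj
          simp only [mem_range] at hj
          exact choose_mono_of_le_half (by omega) (by omega)
      _ = ℓ * (3*ℓ).choose (ℓ-1) := by simp [mul_comm]
  have h2 : 2 * (3*ℓ).choose (ℓ-1) ≤ (3*ℓ).choose ℓ := by
    obtain ⟨k, rfl⟩ : ∃ k, ℓ = k + 1 := ⟨ℓ-1, by omega⟩
    have hid := Nat.choose_succ_right_eq (3*(k+1)) k
    have e3 : 3*(k+1) - k = 2*k+3 := by omega
    rw [e3] at hid
    simp only [Nat.add_sub_cancel]
    -- hid : C(3(k+1), k+1) * (k+1) = C(3(k+1), k) * (2k+3)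
    have : 2 * (k+1) * (3*(k+1)).choose k ≤ (2*k+3) * (3*(k+1)).choose k :=
      Nat.mul_le_mul_right _ (by omega)
    have h4 : 2 * (k+1) * (3*(k+1)).choose k ≤ (k+1) * (3*(k+1)).choose (k+1) := by
      calc 2 * (k+1) * (3*(k+1)).choose k ≤ (2*k+3) * (3*(k+1)).choose k := this
        _ = (3*(k+1)).choose k * (2*k+3) := by ring
        _ = (3*(k+1)).choose (k+1) * (k+1) := by rw [← hid]
        _ = (k+1) * (3*(k+1)).choose (k+1) := by ring
    have := Nat.le_of_mul_le_mul_left (by linarith [h4] : (k+1) * (2 * (3*(k+1)).choose k) ≤ (k+1) * ((3*(k+1)).choose (k+1))) (by omega)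
    exact this
  have hL1 := L1 ℓ hℓ
  have hpow : 2^(3*ℓ+1) = 2 * 2^(3*ℓ) := by ring
  -- combine
  have h2U : 2 * (∑ j ∈ range ℓ, (3*ℓ).choose j) ≤ ℓ * (3*ℓ).choose ℓ := by
    calc 2 * (∑ j ∈ range ℓ, (3*ℓ).choose j) ≤ 2 * (ℓ * (3*ℓ).choose (ℓ-1)) :=
          Nat.mul_le_mul_left _ hU
      _ = ℓ * (2 * (3*ℓ).choose (ℓ-1)) := by ring
      _ ≤ ℓ * (3*ℓ).choose ℓ := Nat.mul_le_mul_left _ h2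
  set C := (3*ℓ).choose ℓ
  set U := ∑ j ∈ range ℓ, (3*ℓ).choose j
  set T := ∑ j ∈ range (2*ℓ+1), (3*ℓ).choose j
  -- goal : 2*ℓ*C + 1 ≤ T;  T + U = 2^(3ℓ);  2U ≤ ℓ*C;  5ℓC + 2 ≤ 2*2^(3ℓ)
  have hTU : T + U = 2^(3*ℓ) := by rw [← hrefl]; omega
  have key : 2 * (2*ℓ*C + 1) + 2*U ≤ 2*T + 2*U := by
    have l1 : 5*(ℓ*C) + 2 ≤ 2 * 2^(3*ℓ) := by
      calc 5*(ℓ*C) + 2 = 5*ℓ*C + 2 := by ring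
        _ ≤ 2^(3*ℓ+1) := hL1
        _ = 2 * 2^(3*ℓ) := hpow
    calc 2 * (2*ℓ*C + 1) + 2*U = 4*(ℓ*C) + 2 + 2*U := by ring
      _ ≤ 4*(ℓ*C) + 2 + ℓ*C := by omega
      _ = 5*(ℓ*C) + 2 := by ring
      _ ≤ 2 * 2^(3*ℓ) := l1
      _ = 2*T + 2*U := by omega
  omega

lemma KLnat (n ℓ : ℕ) (h3 : 3*ℓ ≤ n) (hln : ℓ < n)
    (hexc : ¬(n = 3*ℓ ∧ 2 ≤ ℓ ∧ ℓ ≤ 4)) :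
    (n - ℓ) * n.choose ℓ + 1 ≤ ∑ j ∈ range (n - ℓ + 1), n.choose j := by
  rcases Nat.eq_zero_or_pos ℓ with h0 | h0
  · subst h0
    simp only [Nat.sub_zero, Nat.choose_zero_right, mul_one]
    rw [Nat.sum_range_choose]
    have := Nat.lt_two_pow_self (n := n)
    omega
  induction n using Nat.strong_induction_on with
  | _ n IH =>
    by_cases hb : n = 3*ℓ
    · subst hb
      have hℓ6 : ℓ = 1 ∨ ℓ = 5 ∨ ℓ = 6 ∨ 7 ≤ ℓ := by omega
      rcases hℓ6 with rfl | rfl | rfl | h7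
      · decide
      · decide
      · decide
      · exact B_large ℓ h7
    · by_cases hb2 : n = 3*ℓ+1 ∧ 2 ≤ ℓ ∧ ℓ ≤ 4
      · obtain ⟨rfl, h2, h4⟩ := hb2
        interval_cases ℓ
        · decide
        · decide
        · decide
      · obtain ⟨m, rfl⟩ : ∃ m, n = m + 1 := ⟨n - 1, by omega⟩
        have hm3 : 3*ℓ ≤ m := by omega
        have hmexc : ¬(m = 3*ℓ ∧ 2 ≤ ℓ ∧ ℓ ≤ 4) := by
          rintro ⟨rfl, hh2, hh4⟩
          exact hb2 ⟨rfl, hh2, hh4⟩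
        have hIH := IH m (by omega) hm3 (by omega) hmexc
        exact KL_step m ℓ h0 hm3 hIH

lemma attachFin_map_val {n : ℕ} (s : Finset ℕ) (h : ∀ m ∈ s, m < n) :
    (s.attachFin h).map Fin.valEmbedding = s := by
  ext m
  simp only [Finset.mem_map, Finset.mem_attachFin, Fin.valEmbedding_apply]
  exact ⟨fun ⟨a, ha, he⟩ => he ▸ ha, fun hm => ⟨⟨m, h m hm⟩, hm, rfl⟩⟩

lemma level_card (n i : ℕ) (F : Finset (Finset ℕ)) (hsub : ∀ A ∈ F, A ⊆ range n) :
    ((Finset.univ.powersetCard i).filter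
       (fun s : Finset (Fin n) => s.map Fin.valEmbedding ∈ F)).card
      = (F.filter (fun A => A.card = i)).card := by
  apply card_nbij (fun s => s.map Fin.valEmbedding)
  · intro s hs
    simp only [coe_filter, Set.mem_setOf_eq, mem_coe, mem_filter, mem_powersetCard] at hs ⊢
    exact ⟨hs.2, by rw [card_map]; exact hs.1.2⟩
  · intro s hs t ht hst
    exact Finset.map_injective _ hst
  · intro A hA
    simp only [coe_filter, Set.mem_setOf_eq, mem_coe] at hA
    obtain ⟨hAF, hAc⟩ := hA
    refine ⟨A.attachFin (fun m hm => mem_range.1 (hsub A hAF hm)), ?_, ?_⟩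
    · simp only [coe_filter, Set.mem_setOf_eq, mem_coe, mem_powersetCard,
        attachFin_map_val]
      exact ⟨⟨subset_univ _, by rw [Finset.card_attachFin]; exact hAc⟩, hAF⟩
    · exact attachFin_map_val _ _

lemma lym_step (n i : ℕ) (hi : 1 ≤ i) (hin : i ≤ n) (F : Finset (Finset ℕ))
    (hsub : ∀ A ∈ F, A ⊆ range n)
    (hdown : ∀ A ∈ F, ∀ B ⊆ A, B ∈ F) :
    ((F.filter (fun A => A.card = i)).card : ℝ) / (n.choose i : ℝ)
      ≤ ((F.filter (fun A => A.card = (i-1))).card : ℝ) / (n.choose (i-1) : ℝ) := by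
  classical
  set 𝒜 := (Finset.univ.powersetCard i).filter
      (fun s : Finset (Fin n) => s.map Fin.valEmbedding ∈ F) with h𝒜
  have hsize : (↑𝒜 : Set (Finset (Fin n))).Sized i := by
    intro s hs
    simp only [h𝒜, coe_filter, Set.mem_setOf_eq, mem_coe, mem_powersetCard] at hs
    exact hs.1.2
  have h1 := Finset.card_div_choose_le_card_shadow_div_choose (𝕜 := ℝ)
      (by omega : i ≠ 0) hsize
  rw [Fintype.card_fin] at h1
  have hshadow : (Finset.shadow 𝒜).card ≤ (F.filter (fun A => A.card = (i-1))).card := by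
    apply card_le_card_of_injOn (fun s => s.map Fin.valEmbedding)
    · intro t ht
      rw [mem_coe, mem_shadow_iff] at ht
      obtain ⟨s, hs, a, ha, rfl⟩ := ht
      simp only [h𝒜, mem_filter, mem_powersetCard] at hs
      simp only [mem_coe, mem_filter]
      constructor
      · exact hdown _ hs.2 _ (map_subset_map.2 (erase_subset _ _))
      · rw [card_map, card_erase_of_mem ha, hs.1.2]
    · intro s _ t _ hst
      exact Finset.map_injective _ hst
  have hc := level_card n i F hsub
  rw [hc] at h1
  refine le_trans h1 ?_
  have hpos : (0:ℝ) < (n.choose (i-1) : ℝ) := Nat.cast_pos.2 (Nat.choose_pos (by omega))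
  exact (div_le_div_iff_of_pos_right hpos).2 (Nat.cast_le.2 hshadow)

lemma abel_bound (p c : ℕ → ℝ) (a : ℕ) :
    ∀ m, (∀ i, a ≤ i → i < a + m → p (i+1) ≤ p i) →
      (∀ t, a ≤ t → t ≤ a + m → 0 ≤ ∑ i ∈ Icc a t, c i) →
      p (a+m) * (∑ i ∈ Icc a (a+m), c i) ≤ ∑ i ∈ Icc a (a+m), p i * c i := by
  intro m
  induction m with
  | zero => intro _ _; simp
  | succ m ih =>
    intro hp hc
    have e : a + (m+1) = (a+m) + 1 := by ring
    rw [e]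
    rw [Finset.sum_Icc_succ_top (by omega), Finset.sum_Icc_succ_top (by omega)]
    have hS : 0 ≤ ∑ i ∈ Icc a (a+m), c i := hc (a+m) (by omega) (by omega)
    have hmono : p ((a+m)+1) ≤ p (a+m) := hp (a+m) (by omega) (by omega)
    have ih' := ih (fun i h1 h2 => hp i h1 (by omega)) (fun t h1 h2 => hc t h1 (by omega))
    nlinarith [ih', hS, hmono]

lemma choose_ge_of_between {n ℓ i : ℕ} (h1 : ℓ ≤ i) (h2 : i ≤ n - ℓ) (h3 : 2 * ℓ ≤ n) :
    n.choose ℓ ≤ n.choose i := by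
  rcases le_or_gt i (n / 2) with h | h
  · exact choose_mono_of_le_half h1 h
  · rw [← Nat.choose_symm (by omega : i ≤ n)]
    exact choose_mono_of_le_half (by omega) (by omega)

-- Icc-form of KLnat
lemma KL_Icc (n ℓ : ℕ) (h3 : 3*ℓ ≤ n) (hln : ℓ < n)
    (hexc : ¬(n = 3*ℓ ∧ 2 ≤ ℓ ∧ ℓ ≤ 4)) :
    (n - ℓ) * n.choose ℓ + 1 ≤ ∑ i ∈ Icc ℓ (n-1), n.choose i + 1 := by
  have hconv : ∑ i ∈ Icc ℓ (n-1), n.choose i + 1 = ∑ j ∈ range (n - ℓ + 1), n.choose j := by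
    have hrefl : ∑ i ∈ Icc ℓ (n-1), n.choose i = ∑ j ∈ Icc 1 (n-ℓ), n.choose j := by
      have := sum_choose_reflect (n := n) (a := ℓ) (b := n-1) (by omega) (by omega)
      rw [this, show n-(n-1) = 1 from by omega]
    rw [hrefl]
    rw [range_eq_Ico, Finset.sum_eq_sum_Ico_succ_bot (by omega), Nat.choose_zero_right,
      ← Finset.Ico_add_one_right_eq_Icc]
    simp only [Nat.succ_eq_add_one, zero_add]
    omega
  rw [hconv]
  exact KLnat n ℓ h3 hln hexc

-- Partial sums nonneg (ℕ form): (t - ℓ + 1) * C(n,ℓ) ≤ ∑_{i ∈ Icc ℓ t} C(n,i)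
lemma partial_sum_nat (n ℓ t : ℕ) (h3 : 3*ℓ ≤ n) (hln : ℓ < n)
    (hexc : ¬(n = 3*ℓ ∧ 2 ≤ ℓ ∧ ℓ ≤ 4)) (ht1 : ℓ ≤ t) (ht2 : t ≤ n - 1) :
    (t - ℓ + 1) * n.choose ℓ ≤ ∑ i ∈ Icc ℓ t, n.choose i := by
  rcases le_or_gt t (n - ℓ) with hc | hc
  · -- termwise
    calc (t - ℓ + 1) * n.choose ℓ = (Icc ℓ t).card * n.choose ℓ := by
          rw [Nat.card_Icc]; congr 1; omega
      _ = (Icc ℓ t).card • n.choose ℓ := by rw [smul_eq_mul]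
      _ ≤ ∑ i ∈ Icc ℓ t, n.choose i := by
          apply card_nsmul_le_sum
          intro i hi
          simp only [mem_Icc] at hi
          exact choose_ge_of_between hi.1 (by omega) (by omega)
  · -- use KL_Icc and bound the tail
    have hsplit : ∑ i ∈ Icc ℓ t, n.choose i + ∑ i ∈ Ico (t+1) n, n.choose i
        = ∑ i ∈ Icc ℓ (n-1), n.choose i := by
      rw [← Finset.Ico_add_one_right_eq_Icc, ← Finset.Ico_add_one_right_eq_Icc]
      rw [show (n-1)+1 = n from by omega]
      exact sum_Ico_consecutive (fun i => n.choose i) (by omega : ℓ ≤ t+1) (by omega : t+1 ≤ n)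
    have htail : ∑ i ∈ Ico (t+1) n, n.choose i ≤ (n - 1 - t) * n.choose ℓ := by
      calc ∑ i ∈ Ico (t+1) n, n.choose i ≤ (Ico (t+1) n).card • n.choose ℓ := by
            apply sum_le_card_nsmul
            intro i hi
            simp only [mem_Ico] at hi
            rw [← Nat.choose_symm (by omega : i ≤ n)]
            exact choose_mono_of_le_half (by omega) (by omega)
        _ = (n - 1 - t) * n.choose ℓ := by
            rw [smul_eq_mul, Nat.card_Ico]; congr 1; omega
    have hKL := KL_Icc n ℓ h3 hln hexc
    -- arithmetic
    have e1 : (n - ℓ) * n.choose ℓ = (t - ℓ + 1) * n.choose ℓ + (n - 1 - t) * n.choose ℓ := by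
      rw [← Nat.add_mul]; congr 1; omega
    omega

theorem stmt_14 (n ℓ : ℕ) (h3ℓ : 3 * ℓ ≤ n) (hℓn : ℓ < n)
    (hexc : ¬ (n = 3 * ℓ ∧ 2 ≤ ℓ ∧ ℓ ≤ 5))
    (F : Finset (Finset ℕ))
    (hsub : ∀ A ∈ F, A ⊆ Finset.range n)
    (hdown : ∀ A ∈ F, ∀ B ⊆ A, B ∈ F)
    (hnorm : binNorm n F < (n : ℝ) + 1) :
    (F.card : ℝ) ≥ (∑ i ∈ Finset.range ℓ, (n.choose i : ℝ)) +
      (binNorm n F - (ℓ : ℝ)) * (n.choose ℓ : ℝ) := by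
  classical
  have hexc' : ¬(n = 3*ℓ ∧ 2 ≤ ℓ ∧ ℓ ≤ 4) := fun ⟨h1, h2, h4⟩ => hexc ⟨h1, h2, by omega⟩
  set a : ℕ → ℕ := fun i => (F.filter (fun A => A.card = i)).card with ha
  have hmaps : ∀ A ∈ F, A.card ∈ range (n+1) := by
    intro A hA
    rw [mem_range]
    have := card_le_card (hsub A hA)
    rw [card_range] at this
    omega
  -- card decomposition
  have hcard : (F.card : ℝ) = ∑ i ∈ range (n+1), (a i : ℝ) := by
    rw [Finset.card_eq_sum_card_fiberwise hmaps]
    push_cast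
    rfl
  -- binNorm decomposition
  have hnormeq : binNorm n F = ∑ i ∈ range (n+1), (a i : ℝ) / (n.choose i : ℝ) := by
    rw [binNorm, ← Finset.sum_fiberwise_of_maps_to hmaps (fun A => 1 / (n.choose A.card : ℝ))]
    apply sum_congr rfl
    intro i _
    rw [Finset.sum_congr rfl (fun A hA => by
      rw [(mem_filter.1 hA).2]), sum_const, ha, nsmul_eq_mul]
    ring
  -- level bounds
  have ha_le : ∀ i, a i ≤ n.choose i := by
    intro i
    have hss : F.filter (fun A => A.card = i) ⊆ (range n).powersetCard i := by
      intro A hA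
      rw [mem_powersetCard]
      exact ⟨hsub A (mem_filter.1 hA).1, (mem_filter.1 hA).2⟩
    have := card_le_card hss
    rwa [card_powersetCard, card_range] at this
  -- a n = 0
  have han : a n = 0 := by
    by_contra hne
    have hnonempty : (F.filter (fun A => A.card = n)).Nonempty :=
      card_pos.1 (Nat.pos_of_ne_zero hne)
    obtain ⟨A, hA⟩ := hnonempty
    obtain ⟨hAF, hAc⟩ := mem_filter.1 hA
    have hAeq : A = range n :=
      eq_of_subset_of_card_le (hsub A hAF) (by rw [card_range, hAc])
    have hpow : (range n).powerset ⊆ F := by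
      intro B hB
      exact hdown A hAF B (by rw [hAeq]; exact mem_powerset.1 hB)
    have hge : (∑ B ∈ (range n).powerset, 1 / (n.choose B.card : ℝ)) ≤ binNorm n F := by
      apply sum_le_sum_of_subset_of_nonneg hpow
      intro B _ _
      positivity
    have hval : (∑ B ∈ (range n).powerset, 1 / (n.choose B.card : ℝ)) = (n : ℝ) + 1 := by
      have hm2 : ∀ B ∈ (range n).powerset, B.card ∈ range (n+1) := by
        intro B hB
        rw [mem_range]
        have := card_le_card (mem_powerset.1 hB)
        rw [card_range] at this
        omega
      rw [← Finset.sum_fiberwise_of_maps_to hm2 (fun B => 1 / (n.choose B.card : ℝ))]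
      have hfib : ∀ i ∈ range (n+1),
          (∑ B ∈ (range n).powerset.filter (fun B => B.card = i),
            1 / (n.choose B.card : ℝ)) = 1 := by
        intro i hi
        rw [mem_range] at hi
        rw [Finset.sum_congr rfl (fun B hB => by rw [(mem_filter.1 hB).2]),
          sum_const, ← powersetCard_eq_filter, card_powersetCard, card_range, nsmul_eq_mul]
        have : (0:ℝ) < (n.choose i : ℝ) := Nat.cast_pos.2 (Nat.choose_pos (by omega))
        field_simp
      rw [Finset.sum_congr rfl hfib, sum_const, card_range, nsmul_eq_mul]
      push_cast
      ring
    rw [hval] at hge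
    linarith
  -- partial sums real
  have hps : ∀ t, ℓ ≤ t → t ≤ n-1 →
      0 ≤ ∑ i ∈ Icc ℓ t, ((n.choose i : ℝ) - (n.choose ℓ : ℝ)) := by
    intro t h1 h2
    have hnat := partial_sum_nat n ℓ t h3ℓ hℓn hexc' h1 h2
    have hcast : ((t - ℓ + 1 : ℕ) : ℝ) * (n.choose ℓ : ℝ)
        ≤ ∑ i ∈ Icc ℓ t, (n.choose i : ℝ) := by
      calc ((t - ℓ + 1 : ℕ) : ℝ) * (n.choose ℓ : ℝ)
          = (((t - ℓ + 1) * n.choose ℓ : ℕ) : ℝ) := by push_cast; ring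
        _ ≤ ((∑ i ∈ Icc ℓ t, n.choose i : ℕ) : ℝ) := Nat.cast_le.2 hnat
        _ = ∑ i ∈ Icc ℓ t, (n.choose i : ℝ) := by push_cast; rfl
    rw [sum_sub_distrib, sub_nonneg, sum_const, Nat.card_Icc, nsmul_eq_mul]
    calc ((t + 1 - ℓ : ℕ) : ℝ) * (n.choose ℓ : ℝ)
        = ((t - ℓ + 1 : ℕ) : ℝ) * (n.choose ℓ : ℝ) := by
          congr 2
          omega
      _ ≤ ∑ i ∈ Icc ℓ t, (n.choose i : ℝ) := hcast
  -- abel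
  have habel : 0 ≤ ∑ i ∈ Icc ℓ (n-1),
      ((a i : ℝ) / (n.choose i : ℝ)) * ((n.choose i : ℝ) - (n.choose ℓ : ℝ)) := by
    have hm := abel_bound (fun i => (a i : ℝ) / (n.choose i : ℝ))
      (fun i => (n.choose i : ℝ) - (n.choose ℓ : ℝ)) ℓ (n-1-ℓ)
      (fun i h1 h2 => by
        have := lym_step n (i+1) (by omega) (by omega) F hsub hdown
        simpa [Nat.add_sub_cancel] using this)
      (fun t h1 h2 => hps t h1 (by omega))
    rw [show ℓ + (n-1-ℓ) = n-1 from by omega] at hm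
    refine le_trans ?_ hm
    apply mul_nonneg
    · positivity
    · exact hps (n-1) (by omega) (by omega)
  -- final assembly
  set Cl : ℝ := (n.choose ℓ : ℝ) with hCl
  set T : ℕ → ℝ := fun i => (a i : ℝ) - ((a i : ℝ) / (n.choose i : ℝ)) * Cl with hT
  have hsplitT : ∑ i ∈ range (n+1), T i
      = ∑ i ∈ range ℓ, T i + ∑ i ∈ Ico ℓ (n+1), T i := by
    rw [range_eq_Ico, ← sum_Ico_consecutive _ (Nat.zero_le ℓ) (by omega : ℓ ≤ n+1),
      ← range_eq_Ico]
  have hA : ∑ i ∈ range ℓ, ((n.choose i : ℝ) - Cl) ≤ ∑ i ∈ range ℓ, T i := by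
    apply sum_le_sum
    intro i hi
    rw [mem_range] at hi
    have hCi : (0:ℝ) < (n.choose i : ℝ) := Nat.cast_pos.2 (Nat.choose_pos (by omega))
    have hCle : (n.choose i : ℝ) ≤ Cl := by
      rw [hCl]
      exact_mod_cast choose_mono_of_le_half (by omega : i ≤ ℓ) (by omega : ℓ ≤ n/2)
    have hq1 : (a i : ℝ) / (n.choose i : ℝ) ≤ 1 :=
      (div_le_one hCi).2 (by exact_mod_cast ha_le i)
    have hq0 : (0:ℝ) ≤ (a i : ℝ) / (n.choose i : ℝ) := by positivity
    have he : (a i : ℝ) = ((a i : ℝ) / (n.choose i : ℝ)) * (n.choose i : ℝ) :=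
      (div_mul_cancel₀ _ hCi.ne').symm
    rw [hT]
    simp only
    have hfact : 0 ≤ (1 - (a i : ℝ) / (n.choose i : ℝ)) * (Cl - (n.choose i : ℝ)) :=
      mul_nonneg (by linarith) (by linarith)
    nlinarith [hfact, he]
  have hB : 0 ≤ ∑ i ∈ Ico ℓ (n+1), T i := by
    have h1 : ∑ i ∈ Ico ℓ (n+1), T i = ∑ i ∈ Ico ℓ n, T i + T n :=
      sum_Ico_succ_top (by omega) _
    have hTn : T n = 0 := by
      rw [hT]; simp [han]
    have h2 : Ico ℓ n = Icc ℓ (n-1) := by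
      rw [← Finset.Ico_add_one_right_eq_Icc]
      congr 1
      omega
    have h3 : ∑ i ∈ Icc ℓ (n-1), T i
        = ∑ i ∈ Icc ℓ (n-1),
          ((a i : ℝ) / (n.choose i : ℝ)) * ((n.choose i : ℝ) - Cl) := by
      apply sum_congr rfl
      intro i hi
      rw [mem_Icc] at hi
      have hCi : (0:ℝ) < (n.choose i : ℝ) := Nat.cast_pos.2 (Nat.choose_pos (by omega))
      rw [hT]
      simp only
      field_simp
    rw [h1, hTn, h2, h3, add_zero]
    exact habel
  have hsum : ∑ i ∈ range (n+1), T i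
      = (F.card : ℝ) - binNorm n F * Cl := by
    rw [hcard, hnormeq, hT]
    rw [sum_sub_distrib, ← sum_mul]
  have hsum2 : ∑ i ∈ range ℓ, ((n.choose i : ℝ) - Cl)
      = (∑ i ∈ range ℓ, (n.choose i : ℝ)) - (ℓ : ℝ) * Cl := by
    rw [sum_sub_distrib, sum_const, card_range, nsmul_eq_mul]
  have key : ∑ i ∈ range ℓ, ((n.choose i : ℝ) - Cl) ≤ ∑ i ∈ range (n+1), T i := by
    rw [hsplitT]
    linarith [hA, hB]
  rw [hsum, hsum2] at key
  rw [ge_iff_le, hCl]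
  linarith [key]
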